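/- A bicolored directed path P_n (vertices x_1,...,x_n with arcs (x_i, x_{i-1}) for i=2,...,n, each arc colored 1 or 2) has a bikernel by monochromatic paths if and only if: P_n contains no two consecutive arcs of the same color, n is odd, and the arc entering the terminal vertex (the vertex of out-degree 0) has color 1. -/

import Mathlib

/-- A bicolored digraph is given by two arc relations `A1` (color-1 arcs) and `A2`
(color-2 arcs). A monochromatic path of color `i` is a nonempty chain of `Ai`-arcs,
i.e. `Relation.TransGen Ai`. A set `B` is a bikernel by monochromatic paths if it is
nonempty, independent by monochromatic paths, absorbent with color 1 and dominant
with color 2. -/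
def IsBikernel {V : Type*} (A1 A2 : V → V → Prop) (B : Set V) : Prop :=
  B.Nonempty ∧
  (∀ u ∈ B, ∀ v ∈ B, u ≠ v →
    ¬ Relation.TransGen A1 u v ∧ ¬ Relation.TransGen A2 u v) ∧
  (∀ v, v ∉ B → ∃ b ∈ B, Relation.TransGen A1 v b) ∧
  (∀ v, v ∉ B → ∃ b ∈ B, Relation.TransGen A2 b v)

/-- The bicolored directed path on vertices `x_0, …, x_{n-1}` (as `Fin n`) with arcs
`(x_{j+1}, x_j)`, where the arc into `x_j` has color `c j` (color 1 is `0`, color 2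
is `1`): the arc relation for color `col`. -/
def pathArc (n : ℕ) (c : ℕ → Fin 2) (col : Fin 2) : Fin n → Fin n → Prop :=
  fun x y => (x : ℕ) = (y : ℕ) + 1 ∧ c (y : ℕ) = col

lemma transGen_path_le {n : ℕ} {c : ℕ → Fin 2} {col : Fin 2} {x y : Fin n}
    (h : Relation.TransGen (pathArc n c col) x y) :
    (y : ℕ) < (x : ℕ) ∧ ∀ m, (y : ℕ) ≤ m → m < (x : ℕ) → c m = col := by
  induction h with
  | @single b h =>
      obtain ⟨h1, h2⟩ := h
      refine ⟨by omega, fun m hm1 hm2 => ?_⟩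
      have hm : m = (b : ℕ) := by omega
      rw [hm]; exact h2
  | tail hab hbc ih =>
      obtain ⟨h1, h2⟩ := hbc
      obtain ⟨ih1, ih2⟩ := ih
      refine ⟨by omega, fun m hm1 hm2 => ?_⟩
      rcases eq_or_lt_of_le hm1 with heq | hlt
      · rw [← heq]; exact h2
      · exact ih2 m (by omega) hm2

/-- A bicolored directed path `P_n` has a bikernel iff it has no two consecutive
arcs of the same color, `n` is odd, and the arc entering the terminal vertex
(the vertex of out-degree 0) has color 1. -/
theorem path_bikernel_iff (n : ℕ) (hn : 2 ≤ n) (c : ℕ → Fin 2) :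
    (∃ B, IsBikernel (pathArc n c 0) (pathArc n c 1) B) ↔
      ((∀ j, j + 2 < n → c j ≠ c (j + 1)) ∧ Odd n ∧ c 0 = 0) := by
  constructor
  · rintro ⟨B, hne, hind, habs, hdom⟩
    -- 0 ∈ B
    have h0 : ∀ h : 0 < n, (⟨0, h⟩ : Fin n) ∈ B := by
      intro h
      by_contra h0
      obtain ⟨b, hb, htg⟩ := habs _ h0
      have := (transGen_path_le htg).1
      simp at this
    -- n-1 ∈ B
    have hlast : ∀ h : n - 1 < n, (⟨n - 1, h⟩ : Fin n) ∈ B := by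
      intro h
      by_contra h0
      obtain ⟨b, hb, htg⟩ := hdom _ h0
      have h2 := (transGen_path_le htg).1
      have h3 := b.isLt
      simp at h2
      omega
    -- no two adjacent vertices in B
    have hadj : ∀ (j : ℕ) (h1 : j < n) (h2 : j + 1 < n),
        (⟨j, h1⟩ : Fin n) ∈ B → (⟨j + 1, h2⟩ : Fin n) ∈ B → False := by
      intro j h1 h2 hj hj1
      have hneq : (⟨j + 1, h2⟩ : Fin n) ≠ ⟨j, h1⟩ := by
        simp [Fin.ext_iff]
      obtain ⟨hA1, hA2⟩ := hind _ hj1 _ hj hneq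
      have hc : c j = 0 ∨ c j = 1 := by omega
      rcases hc with hc | hc
      · exact hA1 (Relation.TransGen.single ⟨rfl, hc⟩)
      · exact hA2 (Relation.TransGen.single ⟨rfl, hc⟩)
    -- color of arc out of a successor of a B-vertex
    have hcB : ∀ (j : ℕ) (h1 : j < n), j + 1 < n → (⟨j, h1⟩ : Fin n) ∈ B → c j = 0 := by
      intro j h1 h2 hj
      have hj1 : (⟨j + 1, h2⟩ : Fin n) ∉ B := fun h => hadj j h1 h2 hj h
      obtain ⟨b, hb, htg⟩ := habs _ hj1
      obtain ⟨hlt, hall⟩ := transGen_path_le htg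
      have hlt' : (b : ℕ) < j + 1 := hlt
      exact hall j (by omega) (Nat.lt_succ_self j)
    have hcB' : ∀ (j : ℕ) (h1 : j + 1 < n), (⟨j + 1, h1⟩ : Fin n) ∈ B → c j = 1 := by
      intro j h1 hj
      have hjlt : j < n := by omega
      have hjn : (⟨j, hjlt⟩ : Fin n) ∉ B := fun h => hadj j hjlt h1 h hj
      obtain ⟨b, hb, htg⟩ := hdom _ hjn
      obtain ⟨hlt, hall⟩ := transGen_path_le htg
      exact hall j le_rfl hlt
    -- step by two
    have hstep : ∀ (j : ℕ) (h1 : j < n) (h2 : j + 2 < n),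
        (⟨j, h1⟩ : Fin n) ∈ B → (⟨j + 2, h2⟩ : Fin n) ∈ B := by
      intro j h1 h2 hj
      by_contra hj2
      obtain ⟨b, hb, htg⟩ := habs _ hj2
      obtain ⟨hlt, hall⟩ := transGen_path_le htg
      have hlt' : (b : ℕ) < j + 2 := hlt
      have hc0 : c (j + 1) = 0 := hall (j + 1) (by omega) (Nat.lt_succ_self (j + 1))
      have h3 : j + 1 < n := by omega
      have hj1 : (⟨j + 1, h3⟩ : Fin n) ∉ B := fun h => hadj j h1 h3 hj h
      obtain ⟨b', hb', htg'⟩ := hdom _ hj1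
      obtain ⟨hlt2, hall2⟩ := transGen_path_le htg'
      have hc1 : c (j + 1) = 1 := hall2 (j + 1) le_rfl hlt2
      rw [hc0] at hc1
      exact absurd hc1 (by decide)
    -- all even vertices are in B
    have heven : ∀ (k : ℕ) (h : 2 * k < n), (⟨2 * k, h⟩ : Fin n) ∈ B := by
      intro k
      induction k with
      | zero => intro h; exact h0 h
      | succ k ih =>
          intro h
          have hk : 2 * k < n := by omega
          have h2 : 2 * k + 2 < n := by omega
          have := hstep (2 * k) hk h2 (ih hk)
          convert this using 2
          omega
    -- odd vertices are not in B
    have hodd : ∀ (j : ℕ) (h : j < n), Odd j → (⟨j, h⟩ : Fin n) ∉ B := by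
      intro j h hoj hjB
      obtain ⟨k, hk⟩ := hoj
      subst hk
      have hk2 : 2 * k < n := by omega
      exact hadj (2 * k) hk2 h (heven k hk2) hjB
    -- n is odd
    have hnodd : Odd n := by
      rcases Nat.even_or_odd n with he | ho
      · exfalso
        obtain ⟨m, hm⟩ := he
        have h1 : n - 1 < n := by omega
        have : Odd (n - 1) := ⟨m - 1, by omega⟩
        exact hodd (n - 1) h1 this (hlast h1)
      · exact ho
    refine ⟨?_, hnodd, ?_⟩
    · intro j hj
      rcases Nat.even_or_odd j with he | ho
      · obtain ⟨k, hk⟩ := he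
        have hk' : j = 2 * k := by omega
        subst hk'
        have h1 : 2 * k < n := by omega
        have hB : (⟨2 * k, h1⟩ : Fin n) ∈ B := heven k h1
        have hc0 : c (2 * k) = 0 := hcB (2 * k) h1 (by omega) hB
        have hB2 : (⟨2 * k + 2, hj⟩ : Fin n) ∈ B := hstep (2 * k) h1 hj hB
        have hc1 : c (2 * k + 1) = 1 := hcB' (2 * k + 1) hj hB2
        rw [hc0, hc1]; decide
      · obtain ⟨k, hk⟩ := ho
        subst hk
        have h1 : 2 * k + 2 < n := by omega
        have hB : (⟨2 * k + 2, h1⟩ : Fin n) ∈ B := by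
          have := heven (k + 1) (by omega)
          convert this using 2
          omega
        have hc0 : c (2 * k + 2) = 0 := hcB (2 * k + 2) h1 (by omega) hB
        have hc1 : c (2 * k + 1) = 1 := hcB' (2 * k + 1) h1 hB
        rw [hc0, hc1]; decide
    · exact hcB 0 (by omega) (by omega) (h0 (by omega))
  · rintro ⟨halt, hodd, hc0⟩
    have hcolor : ∀ j, j + 1 < n → c j = if Even j then 0 else 1 := by
      intro j
      induction j with
      | zero => intro _; simpa using hc0
      | succ j ih =>
          intro h
          have h1 : j + 1 < n := by omega
          have hne := halt j (by omega)
          have hcj := ih h1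
          have hc2 : c (j + 1) = 0 ∨ c (j + 1) = 1 := by omega
          rcases Nat.even_or_odd j with he | ho
          · rw [if_pos he] at hcj
            have : ¬ Even (j + 1) := by simp [Nat.even_add_one, he]
            rw [if_neg this]
            rcases hc2 with hc2 | hc2
            · exact absurd (hcj.trans hc2.symm) hne
            · exact hc2
          · have he' : ¬ Even j := Nat.not_even_iff_odd.mpr ho
            rw [if_neg he'] at hcj
            have : Even (j + 1) := by simpa [Nat.even_add_one] using he'
            rw [if_pos this]
            rcases hc2 with hc2 | hc2
            · exact hc2
            · exact absurd (hcj.trans hc2.symm) hne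
    refine ⟨{x : Fin n | Even (x : ℕ)}, ⟨⟨0, by omega⟩, ?_⟩, ?_, ?_, ?_⟩
    · show Even ((⟨0, by omega⟩ : Fin n) : ℕ)
      exact Even.zero
    · intro u hu v hv huv
      have hu' : Even (u : ℕ) := hu
      have hv' : Even (v : ℕ) := hv
      have key : ∀ col : Fin 2, ¬ Relation.TransGen (pathArc n c col) u v := by
        intro col htg
        obtain ⟨hlt, hall⟩ := transGen_path_le htg
        have h2 : (v : ℕ) + 2 ≤ (u : ℕ) := by
          obtain ⟨a, ha⟩ := hu'
          obtain ⟨b, hb⟩ := hv'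
          have : (u : ℕ) ≠ (v : ℕ) := fun h => huv (Fin.ext h)
          omega
        have hc1 : c (v : ℕ) = col := hall (v : ℕ) le_rfl (by omega)
        have hc2 : c ((v : ℕ) + 1) = col := hall ((v : ℕ) + 1) (by omega) (by omega)
        have := halt (v : ℕ) (by have := u.isLt; omega)
        rw [hc1, hc2] at this
        exact this rfl
      exact ⟨key 0, key 1⟩
    · intro v hv
      have hv' : Odd (v : ℕ) := Nat.not_even_iff_odd.mp hv
      obtain ⟨k, hk⟩ := hv'
      have h1 : (v : ℕ) - 1 < n := by have := v.isLt; omega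
      refine ⟨⟨(v : ℕ) - 1, h1⟩, ?_, Relation.TransGen.single ⟨?_, ?_⟩⟩
      · show Even (((⟨(v : ℕ) - 1, h1⟩ : Fin n)) : ℕ)
        exact ⟨k, by simp; omega⟩
      · show (v : ℕ) = (v : ℕ) - 1 + 1
        omega
      · show c ((v : ℕ) - 1) = 0
        have := hcolor ((v : ℕ) - 1) (by have := v.isLt; omega)
        rw [if_pos ⟨k, by omega⟩] at this
        exact this
    · intro v hv
      have hv' : Odd (v : ℕ) := Nat.not_even_iff_odd.mp hv
      obtain ⟨k, hk⟩ := hv'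
      obtain ⟨m, hm⟩ := hodd
      have h1 : (v : ℕ) + 1 < n := by have := v.isLt; omega
      refine ⟨⟨(v : ℕ) + 1, h1⟩, ?_, Relation.TransGen.single ⟨rfl, ?_⟩⟩
      · show Even (((⟨(v : ℕ) + 1, h1⟩ : Fin n)) : ℕ)
        exact ⟨k + 1, by simp; omega⟩
      · show c (v : ℕ) = 1
        have := hcolor (v : ℕ) h1
        rw [if_neg (by simp [Nat.even_iff]; omega)] at this
        exact this
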